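/- Let $\mathcal{I} = \{0, 1, \dots, n\}$ index $n+1$ agents, each with probability densities $p_i^{(k)}, p_i^{(k+1)}$ on a finite set $\mathcal{F}$, and let $\psi : \mathcal{F} \times \mathcal{F} \to \mathbb{R}_{\ge 0}$ be symmetric ($\psi(f,g) = \psi(g,f)$). Define the expected collision penalty $c(p, q) = \sum_{f,g} \psi(f,g) p(f) q(g)$ and the joint penalty $J_c(p_0,\dots,p_n) = \sum_{i < j} c(p_i, p_j)$. Suppose for each $i$, $\bar{c}_i(p_i^{(k+1)}) \le \bar{c}_i(p_i^{(k)}) - D_{KL}(p_i^{(k+1)} \Vert p_i^{(k)})$, where $\bar{c}_i(p) = \sum_{j < i} c(p, p_j^{(k+1)}) + \sum_{j > i} c(p, p_j^{(k)})$. Then $J_c(p_0^{(k+1)}, \dots, p_n^{(k+1)}) \le J_c(p_0^{(k)}, \dots, p_n^{(k)}) - \sum_i D_{KL}(p_i^{(k+1)} \Vert p_i^{(k)})$. -/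
import Mathlib


open Finset

variable {F : Type*} [Fintype F]

/-- Expected collision penalty between two densities. -/
def cpen (ψ : F → F → ℝ) (p q : F → ℝ) : ℝ :=
  ∑ f, ∑ g, ψ f g * p f * q g

/-- Joint expected collision penalty of a family of densities. -/
def Jc {n : ℕ} (ψ : F → F → ℝ) (p : Fin (n + 1) → F → ℝ) : ℝ :=
  ∑ i, ∑ j ∈ Finset.univ.filter (fun j => i < j), cpen ψ (p i) (p j)

lemma cpen_symm (ψ : F → F → ℝ) (hψ : ∀ f g, ψ f g = ψ g f) (p q : F → ℝ) :
    cpen ψ p q = cpen ψ q p := by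
  unfold cpen
  rw [Finset.sum_comm]
  apply Finset.sum_congr rfl; intro f _
  apply Finset.sum_congr rfl; intro g _
  rw [hψ]; ring

lemma sum_lt_swap {m : ℕ} (f : Fin m → Fin m → ℝ) :
    ∑ i, ∑ j ∈ Finset.univ.filter (fun j => j < i), f i j
      = ∑ i, ∑ j ∈ Finset.univ.filter (fun j => i < j), f j i := by
  exact Finset.sum_comm' (fun x y => by simp)

/-- Summing the per-agent sufficient-decrease inequalities yields
    sufficient decrease of the joint expected collision penalty. -/
theorem joint_penalty_sufficient_decrease
    {F : Type*} [Fintype F] [Nonempty F] {n : ℕ}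
    (ψ : F → F → ℝ) (hψ_nonneg : ∀ f g, 0 ≤ ψ f g)
    (hψ_symm : ∀ f g, ψ f g = ψ g f)
    (pk pk1 : Fin (n + 1) → F → ℝ)
    (hpk_pos : ∀ i f, 0 < pk i f) (hpk_sum : ∀ i, ∑ f, pk i f = 1)
    (hpk1_nonneg : ∀ i f, 0 ≤ pk1 i f) (hpk1_sum : ∀ i, ∑ f, pk1 i f = 1)
    (hstep : ∀ i : Fin (n + 1),
      ((∑ j ∈ Finset.univ.filter (fun j => j < i), cpen ψ (pk1 i) (pk1 j)) +
        ∑ j ∈ Finset.univ.filter (fun j => i < j), cpen ψ (pk1 i) (pk j)) ≤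
      ((∑ j ∈ Finset.univ.filter (fun j => j < i), cpen ψ (pk i) (pk1 j)) +
        ∑ j ∈ Finset.univ.filter (fun j => i < j), cpen ψ (pk i) (pk j)) -
      ∑ f, pk1 i f * Real.log (pk1 i f / pk i f)) :
    Jc ψ pk1 ≤ Jc ψ pk - ∑ i, ∑ f, pk1 i f * Real.log (pk1 i f / pk i f) := by
  have hsum := Finset.sum_le_sum (fun i (_ : i ∈ Finset.univ) => hstep i)
  rw [Finset.sum_sub_distrib, Finset.sum_add_distrib, Finset.sum_add_distrib] at hsum
  have hA : ∑ i, ∑ j ∈ Finset.univ.filter (fun j => j < i), cpen ψ (pk1 i) (pk1 j)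
      = Jc ψ pk1 := by
    rw [sum_lt_swap]
    unfold Jc
    exact Finset.sum_congr rfl fun i _ => Finset.sum_congr rfl fun j _ =>
      cpen_symm ψ hψ_symm _ _
  have hB : ∑ i, ∑ j ∈ Finset.univ.filter (fun j => j < i), cpen ψ (pk i) (pk1 j)
      = ∑ i, ∑ j ∈ Finset.univ.filter (fun j => i < j), cpen ψ (pk1 i) (pk j) := by
    rw [sum_lt_swap]
    exact Finset.sum_congr rfl fun i _ => Finset.sum_congr rfl fun j _ =>
      cpen_symm ψ hψ_symm _ _
  rw [hA, hB] at hsum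
  have : Jc ψ pk = ∑ i, ∑ j ∈ Finset.univ.filter (fun j => i < j), cpen ψ (pk i) (pk j) := rfl
  linarith
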